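/- Let t be a real number in the image of k (the Lagrange spectrum) and let ε > 0. Given any irrational x = [0; a_1, a_2, …] ∈ (0,1) with k(x) = t, there exist a positive integer n₀ and positive integers (b_j)_{j<n₀} (extending to −∞) such that the bi-infinite sequence (…, b_{n₀−2}, b_{n₀−1}, a_{n₀}, a_{n₀+1}, a_{n₀+2}, …) belongs to Σ_{t+ε}. -/

import Mathlib

open Filter Set MeasureTheory Topology
open scoped ENNReal NNReal

noncomputable section

/-- A dimension function: positive on `(0,∞)`, nondecreasing, right-continuous,
with `h r → 0` as `r → 0⁺`. -/
def DimensionFunction (h : ℝ → ℝ) : Prop :=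
  (∀ r : ℝ, 0 < r → 0 < h r) ∧ MonotoneOn h (Set.Ioi (0 : ℝ)) ∧
    (∀ r : ℝ, 0 < r → ContinuousWithinAt h (Set.Ici r) r) ∧
    Tendsto h (nhdsWithin 0 (Set.Ioi 0)) (nhds 0)

/-- The generalized Hausdorff (outer) measure `H^h` associated to a gauge function `h`. -/
def hMeas (h : ℝ → ℝ) : Measure ℝ :=
  Measure.mkMetric (fun d : ℝ≥0∞ => ENNReal.ofReal (h d.toReal))

/-- The set of rational solutions (in lowest terms) of `|x - p/q| < 1/(c q²)`. -/
def diophSols (c : ℝ) (x : ℝ) : Set ℚ :=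
  {r : ℚ | |x - (r : ℝ)| < 1 / (c * (r.den : ℝ) ^ 2)}

/-- The best constant of Diophantine approximation of `x`, valued in `(0,∞]`:
`k(x) = sup { c > 0 : |x - p/q| < 1/(c q²) has infinitely many rational solutions }`. -/
def kval (x : ℝ) : ℝ≥0∞ :=
  sSup (ENNReal.ofReal '' {c : ℝ | 0 < c ∧ (diophSols c x).Infinite})

/-- `k⁻¹(3)`, the set of irrational numbers with `k(x) = 3`. -/
def kinv3 : Set ℝ := {x : ℝ | Irrational x ∧ kval x = 3}

/-- `x` is attainable: `|x - p/q| ≤ 1/(3 q²)` has infinitely many rational solutions. -/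
def Attainable (x : ℝ) : Prop :=
  {r : ℚ | |x - (r : ℝ)| ≤ 1 / (3 * (r.den : ℝ) ^ 2)}.Infinite

/-- Value of a finite continued fraction `[a₀; a₁, …, aₙ]`. -/
def cfListVal : List ℕ → ℝ
  | [] => 0
  | a :: l => (a : ℝ) + 1 / cfListVal l

/-- Value of the infinite continued fraction `[a 0; a 1, a 2, …]`. -/
def cfVal (a : ℕ → ℕ) : ℝ :=
  limUnder atTop (fun n => cfListVal ((List.range (n + 1)).map a))

/-- Value of the infinite continued fraction `[0; b 1, b 2, …]`. -/
def cfVal01 (b : ℕ → ℕ) : ℝ :=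
  cfVal (fun n => if n = 0 then 0 else b n)

/-- `λ_i(a) = [a_i; a_{i+1}, a_{i+2}, …] + [0; a_{i-1}, a_{i-2}, …]` for a bi-infinite
sequence `a`. -/
def lambdaZ (i : ℤ) (a : ℤ → ℕ) : ℝ :=
  cfVal (fun n => a (i + n)) + cfVal01 (fun n => a (i - n))

/-- The subshift `Σ_t` of bi-infinite sequences of positive integers with
`sup_n λ_n(a) ≤ t`. -/
def SigmaT (t : ℝ) : Set (ℤ → ℕ) :=
  {a | (∀ n, 0 < a n) ∧ ∀ i : ℤ, lambdaZ i a ≤ t}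

/-- `Σ(t, n)`: length-`n` words over the positive integers occurring as subwords of
sequences in `Σ_t`. -/
def SigmaWords (t : ℝ) (n : ℕ) : Set (Fin n → ℕ) :=
  {w | ∃ a ∈ SigmaT t, ∃ i : ℤ, ∀ j : Fin n, w j = a (i + (j : ℤ))}

/-- The set `K_t`: numbers `[0; a 1, a 2, …] ∈ [0,1]` whose sequence of partial quotients
extends to a bi-infinite sequence of positive integers with `λ_k ≤ t` for all `k ∈ ℤ`. -/
def Kt (t : ℝ) : Set ℝ :=
  {x | x ∈ Set.Icc (0 : ℝ) 1 ∧ ∃ a : ℤ → ℕ, (∀ n, 0 < a n) ∧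
    x = cfVal01 (fun j : ℕ => a (j : ℤ)) ∧ ∀ i : ℤ, lambdaZ i a ≤ t}

/-- Concatenation of the blocks `1^{e 1} 2 2 1^{e 2} 2 2 ⋯ 1^{e i} 2 2`. -/
def blockList (e : ℕ → ℕ) : ℕ → List ℕ
  | 0 => []
  | i + 1 => blockList e i ++ (List.replicate (e (i + 1)) 1 ++ [2, 2])

/-- The `n`-th (0-indexed) partial quotient of `[0; 1^{e 1}, 2, 2, 1^{e 2}, 2, 2, …]`. -/
def quotSeq (e : ℕ → ℕ) (n : ℕ) : ℕ := (blockList e (n + 1)).getD n 1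

/-- `Γ_h(r) = r · inf_{0 < s ≤ r} h(s)/s`. -/
def GammaH (h : ℝ → ℝ) (r : ℝ) : ℝ :=
  r * sInf ((fun s => h s / s) '' Set.Ioc 0 r)

namespace CFA

abbrev V := cfListVal

def PosL (l : List ℕ) : Prop := ∀ x ∈ l, 0 < x

lemma posL_nil : PosL [] := by intro x hx; simp at hx

lemma posL_cons {a l} (h : PosL (a :: l)) : 0 < a ∧ PosL l := by
  constructor
  · exact h a (List.mem_cons_self)
  · intro x hx; exact h x (List.mem_cons_of_mem _ hx)

lemma V_nil : V [] = 0 := rfl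

lemma V_cons (a : ℕ) (l : List ℕ) : V (a :: l) = (a : ℝ) + 1 / V l := rfl

lemma V_nonneg : ∀ l, PosL l → 0 ≤ V l := by
  intro l hl
  induction l with
  | nil => simp [V_nil]
  | cons a l ih =>
    obtain ⟨ha, hl'⟩ := posL_cons hl
    rw [V_cons]
    have := ih hl'
    positivity

lemma V_cases : ∀ l, PosL l → V l = 0 ∨ 1 ≤ V l := by
  intro l hl
  cases l with
  | nil => left; rfl
  | cons a l =>
    right
    obtain ⟨ha, hl'⟩ := posL_cons hl
    rw [V_cons]
    have h1 : (1:ℝ) ≤ (a:ℝ) := by exact_mod_cast ha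
    have h2 : 0 ≤ 1 / V l := by
      have := V_nonneg l hl'; positivity
    linarith

lemma V_cons_lb {a : ℕ} {l : List ℕ} (hl : PosL l) : (a : ℝ) ≤ V (a :: l) := by
  rw [V_cons]
  have := V_nonneg l hl
  have : 0 ≤ 1 / V l := by positivity
  linarith

lemma V_cons_ub {a : ℕ} {l : List ℕ} (hl : PosL l) : V (a :: l) ≤ (a : ℝ) + 1 := by
  rw [V_cons]
  rcases V_cases l hl with h | h
  · simp [h]
  · have h0 : 0 < V l := by linarith
    have : 1 / V l ≤ 1 := by
      rw [div_le_one h0]; linarith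
    linarith

lemma V_cons_one_le {a : ℕ} {l : List ℕ} (ha : 0 < a) (hl : PosL l) : 1 ≤ V (a :: l) := by
  have := V_cons_lb (a := a) hl
  have h1 : (1:ℝ) ≤ (a:ℝ) := by exact_mod_cast ha
  linarith

lemma inv_V_mem {l : List ℕ} (hl : PosL l) : 0 ≤ 1 / V l ∧ 1 / V l ≤ 1 := by
  rcases V_cases l hl with h | h
  · simp [h]
  · constructor
    · positivity
    · rw [div_le_one (by linarith)]; exact h

lemma Dbound : ∀ (k : ℕ) (w l l' : List ℕ), w.length ≤ k → PosL w → PosL l → PosL l' →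
    |1 / V (w ++ l) - 1 / V (w ++ l')| ≤ 2 * (1/2 : ℝ) ^ w.length := by
  intro k
  induction k using Nat.strong_induction_on with
  | _ k ih =>
    intro w l l' hlen hw hl hl'
    match w with
    | [] =>
      simp only [List.nil_append, List.length_nil, pow_zero, mul_one]
      obtain ⟨h1, h2⟩ := inv_V_mem hl
      obtain ⟨h3, h4⟩ := inv_V_mem hl'
      rw [abs_sub_le_iff]; constructor <;> linarith
    | [a] =>
      obtain ⟨ha, _⟩ := posL_cons hw
      have hu : 1 ≤ V (a :: l) := V_cons_one_le ha hl
      have hu' : 1 ≤ V (a :: l') := V_cons_one_le ha hl'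
      have h1 : 0 ≤ 1 / V (a :: l) ∧ 1 / V (a :: l) ≤ 1 := by
        constructor
        · positivity
        · rw [div_le_one (by linarith)]; exact hu
      have h2 : 0 ≤ 1 / V (a :: l') ∧ 1 / V (a :: l') ≤ 1 := by
        constructor
        · positivity
        · rw [div_le_one (by linarith)]; exact hu'
      simp only [List.singleton_append, List.length_singleton, pow_one]
      rw [abs_sub_le_iff]; constructor <;> [linarith [h1.1,h1.2,h2.1,h2.2]; linarith [h1.1,h1.2,h2.1,h2.2]]
    | a :: b :: w' =>
      simp only [List.cons_append, List.length_cons]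
      obtain ⟨ha, hw1⟩ := posL_cons hw
      obtain ⟨hb, hw'⟩ := posL_cons hw1
      have hk : w'.length < k := by
        simp only [List.length_cons] at hlen; omega
      have hW : PosL (w' ++ l) := by
        intro x hx; rcases List.mem_append.mp hx with h | h
        · exact hw' x h
        · exact hl x h
      have hW' : PosL (w' ++ l') := by
        intro x hx; rcases List.mem_append.mp hx with h | h
        · exact hw' x h
        · exact hl' x h
      set W := V (w' ++ l) with hWdef
      set W' := V (w' ++ l') with hW'def
      have hs : 1 ≤ V (b :: (w' ++ l)) := V_cons_one_le hb hW
      have hs' : 1 ≤ V (b :: (w' ++ l')) := V_cons_one_le hb hW'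
      set s := V (b :: (w' ++ l)) with hsdef
      set s' := V (b :: (w' ++ l')) with hs'def
      have hu : 1 ≤ V (a :: b :: (w' ++ l)) := V_cons_one_le ha (by
        intro x hx; rcases List.mem_cons.mp hx with h | h
        · subst h; exact hb
        · exact hW x h)
      have hu' : 1 ≤ V (a :: b :: (w' ++ l')) := V_cons_one_le ha (by
        intro x hx; rcases List.mem_cons.mp hx with h | h
        · subst h; exact hb
        · exact hW' x h)
      set u := V (a :: b :: (w' ++ l)) with hudef
      set u' := V (a :: b :: (w' ++ l')) with hu'def
      have hue : u = (a:ℝ) + 1/s := rfl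
      have hu'e : u' = (a:ℝ) + 1/s' := rfl
      have hse : s = (b:ℝ) + 1/W := rfl
      have hs'e : s' = (b:ℝ) + 1/W' := rfl
      have hsne : s ≠ 0 := by linarith
      have hs'ne : s' ≠ 0 := by linarith
      have hune : u ≠ 0 := by linarith
      have hu'ne : u' ≠ 0 := by linarith
      -- key identity
      have e1 : 1/u - 1/u' = (1/s' - 1/s) / (u * u') := by
        rw [hue, hu'e]
        field_simp
        ring
      have e2 : 1/s - 1/s' = (1/W' - 1/W) / (s * s') := by
        rw [div_sub_div _ _ hsne hs'ne]
        rw [show (1 * s' - s * 1) = 1/W' - 1/W by rw [hse, hs'e]; ring]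
      have e2' : 1/s' - 1/s = (1/W - 1/W') / (s * s') := by
        rw [← neg_sub (1/s) (1/s'), e2, ← neg_div, neg_sub]
      have e3 : 1/u - 1/u' = (1/W - 1/W') / (u * u' * s * s') := by
        rw [e1, e2', div_div]
        ring_nf
      have hus : 2 ≤ u * s := by
        rw [hue]
        have : ((a:ℝ) + 1/s) * s = a * s + 1 := by field_simp
        rw [this]
        have h1 : (1:ℝ) ≤ (a:ℝ) := by exact_mod_cast ha
        nlinarith
      have hus' : 2 ≤ u' * s' := by
        rw [hu'e]
        have : ((a:ℝ) + 1/s') * s' = a * s' + 1 := by field_simp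
        rw [this]
        have h1 : (1:ℝ) ≤ (a:ℝ) := by exact_mod_cast ha
        nlinarith
      have hprod : 4 ≤ u * u' * s * s' := by nlinarith
      have hppos : (0:ℝ) < u * u' * s * s' := by linarith
      have ihb := ih w'.length hk w' l l' le_rfl hw' hl hl'
      calc |1/u - 1/u'| = |1/W - 1/W'| / (u * u' * s * s') := by
            rw [e3, abs_div, abs_of_pos hppos]
        _ ≤ (2 * (1/2:ℝ)^w'.length) / 4 := by
            apply div_le_div₀ (by positivity) ihb (by norm_num) hprod
        _ = 2 * (1/2:ℝ)^(w'.length + 1 + 1) := by ring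

open Filter

def posS (c : ℕ → ℕ) : Prop := ∀ i, 0 < c i

def pref (c : ℕ → ℕ) (k : ℕ) : List ℕ := (List.range k).map c

def pv (c : ℕ → ℕ) (n : ℕ) : ℝ := cfListVal ((List.range (n + 1)).map c)

lemma posL_pref {c : ℕ → ℕ} (hc : posS c) (k : ℕ) : PosL (pref c k) := by
  intro x hx
  simp only [pref, List.mem_map] at hx
  obtain ⟨i, _, rfl⟩ := hx
  exact hc i

lemma pref_length (c : ℕ → ℕ) (k : ℕ) : (pref c k).length = k := by
  simp [pref]

lemma pref_add (c : ℕ → ℕ) (k m : ℕ) :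
    pref c (k + m) = pref c k ++ pref (fun i => c (k + i)) m := by
  simp only [pref, List.range_add, List.map_append, List.map_map]
  rfl

lemma pref_succ_cons (c : ℕ → ℕ) (k : ℕ) :
    pref c (k + 1) = c 0 :: pref (fun i => c (i + 1)) k := by
  simp only [pref, List.range_succ_eq_map, List.map_cons, List.map_map]
  rfl

lemma pv_eq (c : ℕ → ℕ) (n : ℕ) : pv c n = V (pref c (n + 1)) := rfl

lemma diff_of_prefix {a : ℕ} {w l l' : List ℕ} (hw : PosL w) (hl : PosL l) (hl' : PosL l') :
    |V ((a :: w) ++ l) - V ((a :: w) ++ l')| ≤ 2 * (1/2 : ℝ) ^ w.length := by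
  have h1 : V ((a :: w) ++ l) = (a : ℝ) + 1 / V (w ++ l) := rfl
  have h2 : V ((a :: w) ++ l') = (a : ℝ) + 1 / V (w ++ l') := rfl
  rw [h1, h2, show ((a:ℝ) + 1 / V (w ++ l)) - ((a:ℝ) + 1 / V (w ++ l')) =
    1 / V (w ++ l) - 1 / V (w ++ l') by ring]
  exact Dbound w.length w l l' le_rfl hw hl hl'

lemma pv_dist {c : ℕ → ℕ} (hc : posS c) {n m : ℕ} (h : n ≤ m) :
    |pv c m - pv c n| ≤ 2 * (1/2 : ℝ) ^ n := by
  obtain ⟨d, rfl⟩ := Nat.exists_eq_add_of_le h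
  have hsplit : pref c (n + d + 1) = pref c (n + 1) ++ pref (fun i => c (n + 1 + i)) d := by
    rw [← pref_add]
    congr 1 <;> omega
  have hcons := pref_succ_cons c n
  rw [pv_eq, pv_eq, hsplit, hcons]
  have h2 : V (c 0 :: pref (fun i => c (i+1)) n) =
      V ((c 0 :: pref (fun i => c (i+1)) n) ++ ([] : List ℕ)) := by
    rw [List.append_nil]
  rw [h2]
  have := diff_of_prefix (a := c 0) (w := pref (fun i => c (i+1)) n)
    (l := pref (fun i => c (n + 1 + i)) d) (l' := [])
    (posL_pref (fun i => hc (i+1)) n) (posL_pref (fun i => hc (n+1+i)) d) posL_nil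
  rw [pref_length] at this
  exact this

lemma pv_cauchy {c : ℕ → ℕ} (hc : posS c) : CauchySeq (pv c) := by
  apply cauchySeq_of_le_geometric (1/2 : ℝ) 2 (by norm_num)
  intro n
  rw [Real.dist_eq, abs_sub_comm]
  exact pv_dist hc (Nat.le_succ n)

lemma cfVal_tendsto {c : ℕ → ℕ} (hc : posS c) :
    Tendsto (pv c) atTop (nhds (cfVal c)) := by
  obtain ⟨x, hx⟩ := cauchySeq_tendsto_of_complete (pv_cauchy hc)
  have : cfVal c = x := by unfold cfVal; exact hx.limUnder_eq
  rw [this]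
  exact hx

lemma pv_lb {c : ℕ → ℕ} (hc : posS c) (n : ℕ) : (c 0 : ℝ) ≤ pv c n := by
  rw [pv_eq, pref_succ_cons]
  exact V_cons_lb (posL_pref (fun i => hc (i+1)) n)

lemma pv_ub {c : ℕ → ℕ} (hc : posS c) (n : ℕ) : pv c n ≤ (c 0 : ℝ) + 1 := by
  rw [pv_eq, pref_succ_cons]
  exact V_cons_ub (posL_pref (fun i => hc (i+1)) n)

lemma cfVal_lb {c : ℕ → ℕ} (hc : posS c) : (c 0 : ℝ) ≤ cfVal c :=
  ge_of_tendsto' (cfVal_tendsto hc) (pv_lb hc)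

lemma cfVal_ub {c : ℕ → ℕ} (hc : posS c) : cfVal c ≤ (c 0 : ℝ) + 1 :=
  le_of_tendsto' (cfVal_tendsto hc) (pv_ub hc)

lemma one_le_cfVal {c : ℕ → ℕ} (hc : posS c) : 1 ≤ cfVal c := by
  have := cfVal_lb hc
  have h1 : (1:ℝ) ≤ (c 0 : ℝ) := by exact_mod_cast hc 0
  linarith

lemma pref_congr {c c' : ℕ → ℕ} (k : ℕ) (h : ∀ i < k, c i = c' i) : pref c k = pref c' k := by
  simp only [pref]
  apply List.map_congr_left
  intro i hi
  exact h i (List.mem_range.mp hi)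

lemma cfVal_dist {c c' : ℕ → ℕ} (hc : posS c) (hc' : posS c') (k : ℕ)
    (h : ∀ i < k + 1, c i = c' i) :
    |cfVal c - cfVal c'| ≤ 2 * (1/2 : ℝ) ^ k := by
  have key : ∀ n, k ≤ n → |pv c n - pv c' n| ≤ 2 * (1/2 : ℝ) ^ k := by
    intro n hn
    have h1 : pref c (n+1) = pref c (k+1) ++ pref (fun i => c (k+1+i)) (n - k) := by
      rw [← pref_add]; congr 1; omega
    have h2 : pref c' (n+1) = pref c' (k+1) ++ pref (fun i => c' (k+1+i)) (n - k) := by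
      rw [← pref_add]; congr 1; omega
    rw [pv_eq, pv_eq, h1, h2, ← pref_congr (k+1) h, pref_succ_cons]
    have := diff_of_prefix (a := c 0) (w := pref (fun i => c (i+1)) k)
      (l := pref (fun i => c (k+1+i)) (n-k)) (l' := pref (fun i => c' (k+1+i)) (n-k))
      (posL_pref (fun i => hc (i+1)) k) (posL_pref (fun i => hc (k+1+i)) (n-k))
      (posL_pref (fun i => hc' (k+1+i)) (n-k))
    rw [pref_length] at this
    exact this
  have htt : Tendsto (fun n => |pv c n - pv c' n|) atTop
      (nhds (|cfVal c - cfVal c'|)) :=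
    ((cfVal_tendsto hc).sub (cfVal_tendsto hc')).abs
  exact le_of_tendsto htt (Filter.eventually_atTop.mpr ⟨k, key⟩)

lemma cfVal_dist_list {c : ℕ → ℕ} (hc : posS c) {r : List ℕ} (hr : PosL r) (k : ℕ) :
    |cfVal c - V (pref c (k + 1) ++ r)| ≤ 2 * (1/2 : ℝ) ^ k := by
  have key : ∀ n, k ≤ n → |pv c n - V (pref c (k+1) ++ r)| ≤ 2 * (1/2 : ℝ) ^ k := by
    intro n hn
    have h1 : pref c (n+1) = pref c (k+1) ++ pref (fun i => c (k+1+i)) (n - k) := by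
      rw [← pref_add]; congr 1; omega
    rw [pv_eq, h1, pref_succ_cons]
    have := diff_of_prefix (a := c 0) (w := pref (fun i => c (i+1)) k)
      (l := pref (fun i => c (k+1+i)) (n-k)) (l' := r)
      (posL_pref (fun i => hc (i+1)) k) (posL_pref (fun i => hc (k+1+i)) (n-k)) hr
    rw [pref_length] at this
    exact this
  have htt : Tendsto (fun n => |pv c n - V (pref c (k+1) ++ r)|) atTop
      (nhds (|cfVal c - V (pref c (k+1) ++ r)|)) :=
    ((cfVal_tendsto hc).sub tendsto_const_nhds).abs
  exact le_of_tendsto htt (Filter.eventually_atTop.mpr ⟨k, key⟩)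

def cm : List ℕ → ℕ × ℕ × ℕ × ℕ
  | [] => (1, 0, 0, 1)
  | a :: l => (a * (cm l).1 + (cm l).2.2.1, a * (cm l).2.1 + (cm l).2.2.2, (cm l).1, (cm l).2.1)

def mA (l : List ℕ) : ℕ := (cm l).1
def mB (l : List ℕ) : ℕ := (cm l).2.1
def mC (l : List ℕ) : ℕ := (cm l).2.2.1
def mD (l : List ℕ) : ℕ := (cm l).2.2.2

@[simp] lemma mA_nil : mA [] = 1 := rfl
@[simp] lemma mB_nil : mB [] = 0 := rfl
@[simp] lemma mC_nil : mC [] = 0 := rfl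
@[simp] lemma mD_nil : mD [] = 1 := rfl
@[simp] lemma mA_cons (a l) : mA (a :: l) = a * mA l + mC l := rfl
@[simp] lemma mB_cons (a l) : mB (a :: l) = a * mB l + mD l := rfl
@[simp] lemma mC_cons (a l) : mC (a :: l) = mA l := rfl
@[simp] lemma mD_cons (a l) : mD (a :: l) = mB l := rfl

lemma cm_append : ∀ (w w' : List ℕ),
    mA (w ++ w') = mA w * mA w' + mB w * mC w' ∧
    mB (w ++ w') = mA w * mB w' + mB w * mD w' ∧
    mC (w ++ w') = mC w * mA w' + mD w * mC w' ∧
    mD (w ++ w') = mC w * mB w' + mD w * mD w' := by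
  intro w w'
  induction w with
  | nil => simp
  | cons a w ih =>
    obtain ⟨h1, h2, h3, h4⟩ := ih
    simp only [List.cons_append, mA_cons, mB_cons, mC_cons, mD_cons, h1, h2, h3, h4]
    exact ⟨by ring, by ring, trivial, trivial⟩

lemma mA_pos : ∀ {w : List ℕ}, PosL w → 1 ≤ mA w := by
  intro w hw
  induction w with
  | nil => simp
  | cons a w ih =>
    obtain ⟨ha, hw'⟩ := posL_cons hw
    have := ih hw'
    simp only [mA_cons]
    nlinarith

lemma mCD_pos : ∀ {w : List ℕ}, PosL w → 1 ≤ mC w + mD w := by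
  intro w hw
  induction w with
  | nil => simp
  | cons a w ih =>
    obtain ⟨ha, hw'⟩ := posL_cons hw
    simp only [mC_cons, mD_cons]
    have h1 := mA_pos hw'
    omega

lemma mB_pos : ∀ {w : List ℕ}, PosL w → w ≠ [] → 1 ≤ mB w := by
  intro w hw hne
  induction w with
  | nil => exact absurd rfl hne
  | cons a w ih =>
    obtain ⟨ha, hw'⟩ := posL_cons hw
    simp only [mB_cons]
    cases w with
    | nil => simp
    | cons b w' =>
      have := ih hw' (by simp)
      nlinarith

lemma cm_det : ∀ (w : List ℕ), (mA w : ℤ) * mD w - mB w * mC w = (-1) ^ w.length := by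
  intro w
  induction w with
  | nil => simp
  | cons a w ih =>
    simp only [mA_cons, mB_cons, mC_cons, mD_cons, List.length_cons]
    push_cast
    push_cast at ih
    rw [pow_succ]
    nlinarith [ih]

lemma denom_pos {w : List ℕ} (hw : PosL w) {T : ℝ} (hT : 1 ≤ T) :
    1 ≤ (mC w : ℝ) * T + mD w := by
  have h := mCD_pos hw
  have h1 : (1:ℝ) ≤ (mC w : ℝ) + mD w := by exact_mod_cast h
  have h2 : (mC w : ℝ) * 1 ≤ (mC w : ℝ) * T := by
    apply mul_le_mul_of_nonneg_left hT (by positivity)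
  nlinarith

lemma numer_pos {w : List ℕ} (hw : PosL w) {T : ℝ} (hT : 1 ≤ T) :
    1 ≤ (mA w : ℝ) * T + mB w := by
  have h := mA_pos hw
  have h1 : (1:ℝ) ≤ (mA w : ℝ) := by exact_mod_cast h
  have h2 : (0:ℝ) ≤ (mB w : ℝ) := by positivity
  nlinarith

lemma V_mobius : ∀ (w l : List ℕ), PosL w → PosL l → l ≠ [] →
    V (w ++ l) = ((mA w : ℝ) * V l + mB w) / ((mC w : ℝ) * V l + mD w) := by
  intro w
  induction w with
  | nil =>
    intro l _ _ _
    simp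
  | cons a w ih =>
    intro l hw hl hlne
    obtain ⟨ha, hw'⟩ := posL_cons hw
    have hT : 1 ≤ V l := by
      cases l with
      | nil => exact absurd rfl hlne
      | cons b l' => exact V_cons_one_le (hl b (List.mem_cons_self)) (posL_cons hl).2
    have hnum := numer_pos hw' hT
    have hden := denom_pos hw' hT
    have hVwl : V (w ++ l) = ((mA w : ℝ) * V l + mB w) / ((mC w : ℝ) * V l + mD w) :=
      ih l hw' hl hlne
    have : V ((a :: w) ++ l) = (a : ℝ) + 1 / V (w ++ l) := rfl
    rw [this, hVwl]
    simp only [mA_cons, mB_cons, mC_cons, mD_cons]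
    push_cast
    rw [one_div_div]
    have hne1 : ((mC w:ℝ) * V l + mD w) ≠ 0 := by linarith
    have hne2 : ((mA w:ℝ) * V l + mB w) ≠ 0 := by linarith
    rw [add_div' _ _ _ hne2]; congr 1; ring

lemma V_eq_A_div_C : ∀ (w : List ℕ), PosL w → w ≠ [] → V w = (mA w : ℝ) / mC w := by
  intro w
  induction w with
  | nil => intro _ h; exact absurd rfl h
  | cons a w ih =>
    intro hw _
    obtain ⟨ha, hw'⟩ := posL_cons hw
    cases w with
    | nil =>
      simp [V_cons, V_nil, mA, mB, mC, mD, cm]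
    | cons b w' =>
      have hVw := ih hw' (by simp)
      have hA := mA_pos hw'
      have hC : 1 ≤ mC (b :: w') := by
        simp only [mC_cons]
        exact mA_pos (posL_cons hw').2
      have hApos : (0:ℝ) < mA (b :: w') := by exact_mod_cast hA
      have hCpos : (0:ℝ) < mC (b :: w') := by exact_mod_cast hC
      have : V (a :: b :: w') = (a : ℝ) + 1 / V (b :: w') := rfl
      rw [this, hVw]
      simp only [mA_cons, mC_cons]
      push_cast
      rw [one_div_div]
      have hD : ((b:ℝ) * (mA w') + (mC w')) ≠ 0 := by
        have h' : (0:ℝ) < ((mA (b::w') : ℕ) : ℝ) := hApos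
        simp only [mA_cons] at h'
        push_cast at h'
        linarith
      rw [add_div' _ _ _ hD]

lemma cm_reverse : ∀ (w : List ℕ), cm w.reverse = (mA w, mC w, mB w, mD w) := by
  intro w
  induction w with
  | nil => simp [cm]
  | cons a w ih =>
    rw [List.reverse_cons]
    have happ := cm_append w.reverse [a]
    have e : cm (w.reverse ++ [a]) = (mA (w.reverse ++ [a]), mB (w.reverse ++ [a]), mC (w.reverse ++ [a]), mD (w.reverse ++ [a])) := rfl
    rw [e, happ.1, happ.2.1, happ.2.2.1, happ.2.2.2]
    have h1 : mA w.reverse = mA w := by rw [show mA w.reverse = (cm w.reverse).1 from rfl, ih]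
    have h2 : mB w.reverse = mC w := by rw [show mB w.reverse = (cm w.reverse).2.1 from rfl, ih]
    have h3 : mC w.reverse = mB w := by rw [show mC w.reverse = (cm w.reverse).2.2.1 from rfl, ih]
    have h4 : mD w.reverse = mD w := by rw [show mD w.reverse = (cm w.reverse).2.2.2 from rfl, ih]
    rw [h1, h2, h3, h4]
    simp only [mA_cons, mB_cons, mC_cons, mD_cons, mA_nil, mB_nil, mC_nil, mD_nil,
      Prod.mk.injEq]
    refine ⟨by ring, by ring, by ring, by ring⟩

lemma pref_ne_nil (c : ℕ → ℕ) (k : ℕ) : pref c (k+1) ≠ [] := by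
  apply List.ne_nil_of_length_pos
  rw [pref_length]; omega

lemma cfVal_mobius {c : ℕ → ℕ} (hc : posS c) (n : ℕ) :
    cfVal c = ((mA (pref c (n+1)) : ℝ) * cfVal (fun i => c (n+1+i)) + mB (pref c (n+1))) /
      ((mC (pref c (n+1)) : ℝ) * cfVal (fun i => c (n+1+i)) + mD (pref c (n+1))) := by
  set w := pref c (n+1) with hw
  have hwpos : PosL w := posL_pref hc _
  set cs : ℕ → ℕ := fun i => c (n+1+i) with hcs
  have hcsp : posS cs := fun i => hc _
  set α := cfVal cs with hα
  have hα1 : 1 ≤ α := one_le_cfVal hcsp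
  have h1 : Tendsto (fun m => pv c (m + (n+1))) atTop (nhds (cfVal c)) :=
    (cfVal_tendsto hc).comp (tendsto_add_atTop_nat (n+1))
  have key : ∀ m, pv c (m + (n+1)) =
      ((mA w:ℝ) * pv cs m + mB w) / ((mC w:ℝ) * pv cs m + mD w) := by
    intro m
    have e : m + (n+1) + 1 = (n+1) + (m+1) := by omega
    rw [pv_eq, e, pref_add c (n+1) (m+1)]
    rw [V_mobius w (pref cs (m+1)) hwpos (posL_pref hcsp _) (pref_ne_nil cs m)]
    rw [← pv_eq]
  have hTm : ∀ m, 1 ≤ pv cs m := by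
    intro m
    have := pv_lb hcsp m
    have h1' : (1:ℝ) ≤ (cs 0 : ℝ) := by exact_mod_cast hcsp 0
    linarith
  have hdenne : ((mC w:ℝ) * α + mD w) ≠ 0 := by
    have := denom_pos hwpos hα1; linarith
  have h2 : Tendsto (fun m => ((mA w:ℝ) * pv cs m + mB w) / ((mC w:ℝ) * pv cs m + mD w))
      atTop (nhds (((mA w:ℝ) * α + mB w) / ((mC w:ℝ) * α + mD w))) := by
    apply Tendsto.div
    · exact ((cfVal_tendsto hcsp).const_mul _).add tendsto_const_nhds
    · exact ((cfVal_tendsto hcsp).const_mul _).add tendsto_const_nhds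
    · exact hdenne
  have h1' : Tendsto (fun m => ((mA w:ℝ) * pv cs m + mB w) / ((mC w:ℝ) * pv cs m + mD w))
      atTop (nhds (cfVal c)) := by
    have : (fun m => pv c (m + (n+1))) =
        (fun m => ((mA w:ℝ) * pv cs m + mB w) / ((mC w:ℝ) * pv cs m + mD w)) := by
      funext m; exact key m
    rwa [this] at h1
  exact tendsto_nhds_unique h1' h2

lemma cfVal01_eq {c : ℕ → ℕ} (hc : ∀ i, 0 < c (i+1)) :
    cfVal01 c = (cfVal (fun i => c (i+1)))⁻¹ := by
  set c' : ℕ → ℕ := fun i => c (i+1) with hc'def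
  have hc' : posS c' := hc
  have hone := one_le_cfVal hc'
  have hne : cfVal c' ≠ 0 := by linarith
  set c01 : ℕ → ℕ := fun n => if n = 0 then 0 else c n with hc01
  have hstep : ∀ n, pv c01 (n + 1) = (pv c' n)⁻¹ := by
    intro n
    rw [pv_eq, pref_succ_cons]
    have hpr : pref (fun i => c01 (i+1)) (n+1) = pref c' (n+1) := by
      apply pref_congr
      intro i _
      simp [hc01, hc'def]
    rw [hpr]
    have : V ((c01 0) :: pref c' (n+1)) = ((c01 0 : ℕ) : ℝ) + 1 / V (pref c' (n+1)) := rfl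
    rw [this]
    simp only [hc01, if_pos rfl]
    rw [← pv_eq, one_div]
    simp
  have h2 : Tendsto (fun n => pv c01 (n + 1)) atTop (nhds ((cfVal c')⁻¹)) := by
    have : (fun n => pv c01 (n + 1)) = fun n => (pv c' n)⁻¹ := funext hstep
    rw [this]
    exact (cfVal_tendsto hc').inv₀ hne
  have h3 : Tendsto (pv c01) atTop (nhds ((cfVal c')⁻¹)) :=
    (tendsto_add_atTop_iff_nat 1).mp h2
  show cfVal c01 = (cfVal c')⁻¹
  unfold cfVal
  exact h3.limUnder_eq

lemma pref_snoc (c : ℕ → ℕ) (k : ℕ) : pref c (k+1) = pref c k ++ [c k] := by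
  simp [pref, List.range_succ]

lemma mA_strictMono {c : ℕ → ℕ} (hc : posS c) :
    StrictMono (fun m => mA (pref c (m+1))) := by
  apply strictMono_nat_of_lt_succ
  intro m
  have h1 : pref c (m+1+1) = pref c (m+1) ++ [c (m+1)] := pref_snoc c (m+1)
  have h2 := (cm_append (pref c (m+1)) [c (m+1)]).1
  have hB : 1 ≤ mB (pref c (m+1)) := mB_pos (posL_pref hc _) (pref_ne_nil c m)
  have hA : 1 ≤ mA (pref c (m+1)) := mA_pos (posL_pref hc _)
  have hcm : 1 ≤ c (m+1) := hc (m+1)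
  have hA1 : mA [c (m+1)] = c (m+1) := by simp
  have hC1 : mC [c (m+1)] = 1 := by simp
  simp only [h1, h2, hA1, hC1]
  nlinarith

lemma coprime_mCA {w : List ℕ} : Nat.Coprime (mC w) (mA w) := by
  have hdet := cm_det w
  set g := Nat.gcd (mC w) (mA w) with hg
  have h1 : (g:ℤ) ∣ (mA w : ℤ) * mD w - (mB w : ℤ) * mC w := by
    apply dvd_sub
    · exact Dvd.dvd.mul_right (Int.natCast_dvd_natCast.mpr (Nat.gcd_dvd_right _ _)) _
    · exact Dvd.dvd.mul_left (Int.natCast_dvd_natCast.mpr (Nat.gcd_dvd_left _ _)) _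
  rw [hdet] at h1
  have h2 : g ∣ ((-1 : ℤ) ^ w.length).natAbs := by
    have := Int.natAbs_dvd_natAbs.mpr h1
    simpa using this
  have h3 : ((-1 : ℤ) ^ w.length).natAbs = 1 := by
    simp [Int.natAbs_pow]
  rw [h3] at h2
  exact Nat.dvd_one.mp h2

/-- The convergent `C/A` as a rational in lowest terms. -/
def convQ (w : List ℕ) (hw : PosL w) : ℚ :=
  Rat.mk' (mC w : ℤ) (mA w) (by have := mA_pos hw; omega)
    (by simpa using coprime_mCA (w := w))

lemma convQ_den (w : List ℕ) (hw : PosL w) : (convQ w hw).den = mA w := rfl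

lemma convQ_cast (w : List ℕ) (hw : PosL w) : ((convQ w hw : ℚ) : ℝ) = (mC w : ℝ) / (mA w) := by
  rw [Rat.cast_def]
  norm_num [convQ]

lemma key_dioph {t δ : ℝ} (hδ : 0 < δ) {x : ℝ} {a : ℕ → ℕ} (ha : ∀ i, 0 < a i)
    (hxa : x = cfVal01 a) (hkx : kval x = ENNReal.ofReal t) :
    1 ≤ t ∧ ∃ N : ℕ, ∀ m, N ≤ m →
      cfVal (fun i => a (m+2+i)) +
        (mB (pref (fun i => a (i+1)) (m+1)) : ℝ) / (mA (pref (fun i => a (i+1)) (m+1))) ≤ t + δ := by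
  classical
  set c : ℕ → ℕ := fun i => a (i+1) with hcdef
  have hc : posS c := fun i => ha (i+1)
  have hx' : x = (cfVal c)⁻¹ := by
    rw [hxa]
    exact cfVal01_eq (fun i => ha (i+1))
  set μ : ℕ → ℝ := fun m => cfVal (fun i => a (m+2+i)) +
      (mB (pref c (m+1)) : ℝ) / (mA (pref c (m+1))) with hμdef
  set rq : ℕ → ℚ := fun m => convQ (pref c (m+1)) (posL_pref hc _) with hrqdef
  -- basic quantities
  have halpha : ∀ m, (fun i => c (m+1+i)) = (fun i => a (m+2+i)) := by
    intro m; funext i; simp only [hcdef]; congr 1; omega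
  have hfacts : ∀ m : ℕ,
      |x - ((rq m : ℚ) : ℝ)| = 1 / (((mA (pref c (m+1)) : ℝ)) ^ 2 * μ m) ∧ 1 < μ m := by
    intro m
    set w := pref c (m+1) with hw
    have hwpos : PosL w := posL_pref hc _
    set A := (mA w : ℝ) with hA
    set B := (mB w : ℝ) with hB
    set C := (mC w : ℝ) with hC
    set D := (mD w : ℝ) with hD
    have hA1 : 1 ≤ A := by rw [hA]; exact_mod_cast mA_pos hwpos
    have hB1 : 1 ≤ B := by rw [hB]; exact_mod_cast mB_pos hwpos (pref_ne_nil c m)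
    have hC0 : 0 ≤ C := by positivity
    have hD0 : 0 ≤ D := by positivity
    set α := cfVal (fun i => a (m+2+i)) with hαdef
    have hα1 : 1 ≤ α := by
      rw [hαdef, ← halpha m]
      exact one_le_cfVal (fun i => hc _)
    have hmob : cfVal c = (A * α + B) / (C * α + D) := by
      have := cfVal_mobius hc m
      rwa [halpha m] at this
    have hnum : 1 ≤ A * α + B := by nlinarith
    have hden : 1 ≤ C * α + D := by
      have := denom_pos hwpos hα1
      rw [← hC, ← hD] at this
      exact this
    have hxval : x = (C * α + D) / (A * α + B) := by
      rw [hx', hmob, inv_div]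
    have hdet : A * D - B * C = ((-1 : ℝ)) ^ (m+1) := by
      have h0 := cm_det w
      have hlen : w.length = m + 1 := pref_length c (m+1)
      rw [hlen] at h0
      have h1 : ((mA w : ℤ) * mD w) = ((-1 : ℤ))^(m+1) + (mB w : ℤ) * mC w := by linarith
      have h2 : ((mA w : ℝ)) * mD w = ((-1 : ℝ))^(m+1) + (mB w : ℝ) * mC w := by
        exact_mod_cast h1
      rw [hA, hB, hC, hD]
      linarith
    have hsub : x - C / A = ((-1 : ℝ)) ^ (m+1) / ((A * α + B) * A) := by
      rw [hxval, div_sub_div _ _ (by linarith : A * α + B ≠ 0) (by linarith : A ≠ 0)]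
      congr 1
      rw [← hdet]; ring
    have hcast : ((rq m : ℚ) : ℝ) = C / A := convQ_cast w hwpos
    have hμ : μ m = α + B / A := rfl
    have habs : |x - ((rq m : ℚ) : ℝ)| = 1 / (A ^ 2 * μ m) := by
      rw [hcast, hsub, abs_div, abs_pow, abs_neg, abs_one, one_pow]
      rw [abs_of_pos (by nlinarith : (0:ℝ) < (A * α + B) * A)]
      congr 1
      rw [hμ]
      field_simp
    refine ⟨habs, ?_⟩
    rw [hμ]
    have : 0 < B / A := by positivity
    linarith
  -- membership in diophSols
  have hmem : ∀ (m : ℕ) (s : ℝ), 0 < s → s < μ m → rq m ∈ diophSols s x := by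
    intro m s hs hsμ
    have ⟨habs, hμ1⟩ := hfacts m
    have hA1 : (1:ℝ) ≤ (mA (pref c (m+1)) : ℝ) := by exact_mod_cast mA_pos (posL_pref hc _)
    have hden : ((rq m).den : ℝ) = (mA (pref c (m+1)) : ℝ) := by
      rw [hrqdef]; norm_num [convQ_den]
    show |x - ((rq m : ℚ) : ℝ)| < 1 / (s * ((rq m).den : ℝ) ^ 2)
    rw [habs, hden]
    set A := (mA (pref c (m+1)) : ℝ)
    have h1 : 0 < A ^ 2 := by positivity
    rw [div_lt_div_iff₀ (by positivity) (by positivity : 0 < s * A^2)]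
    nlinarith
  -- injectivity
  have hinj : Function.Injective rq := by
    intro m m' h
    have : (rq m).den = (rq m').den := by rw [h]
    have h2 : mA (pref c (m+1)) = mA (pref c (m'+1)) := this
    exact (mA_strictMono hc).injective h2
  -- t ≥ 1
  have ht1 : 1 ≤ t := by
    have hinf : (diophSols 1 x).Infinite := by
      apply Set.infinite_of_injective_forall_mem hinj
      intro m
      exact hmem m 1 one_pos (hfacts m).2
    have hle : ENNReal.ofReal 1 ≤ kval x := le_sSup ⟨1, ⟨one_pos, hinf⟩, rfl⟩
    by_contra hlt
    push_neg at hlt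
    rw [hkx] at hle
    have : ENNReal.ofReal t < ENNReal.ofReal 1 := by
      rw [ENNReal.ofReal_lt_ofReal_iff one_pos]
      exact hlt
    exact absurd hle this.not_ge
  refine ⟨ht1, ?_⟩
  by_contra hcon
  push_neg at hcon
  have hS : {m : ℕ | t + δ < μ m}.Infinite := by
    by_contra hfin
    rw [Set.not_infinite] at hfin
    obtain ⟨ub, hub⟩ := hfin.bddAbove
    obtain ⟨m, hm, hμm⟩ := hcon (ub + 1)
    have := hub (hμm : t + δ < μ m)
    omega
  have himg : (diophSols (t + δ) x).Infinite := by
    apply Set.Infinite.mono _ (hS.image (hinj.injOn))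
    rintro r ⟨m, hm, rfl⟩
    exact hmem m (t + δ) (by linarith) hm
  have hle : ENNReal.ofReal (t + δ) ≤ kval x :=
    le_sSup ⟨t + δ, ⟨by linarith, himg⟩, rfl⟩
  rw [hkx] at hle
  rw [ENNReal.ofReal_le_ofReal_iff (by linarith)] at hle
  linarith


lemma inv_diff_le {u v : ℝ} (hu : 1 ≤ u) (hv : 1 ≤ v) : |u⁻¹ - v⁻¹| ≤ |u - v| := by
  have hu0 : u ≠ 0 := by linarith
  have hv0 : v ≠ 0 := by linarith
  have h1 : u⁻¹ - v⁻¹ = (v - u) / (u * v) := by field_simp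
  rw [h1, abs_div, abs_of_pos (by nlinarith : (0:ℝ) < u * v)]
  rw [div_le_iff₀ (by nlinarith : (0:ℝ) < u * v)]
  rw [abs_sub_comm v u]
  have h2 : |u - v| * 1 ≤ |u - v| * (u * v) :=
    mul_le_mul_of_nonneg_left (by nlinarith) (abs_nonneg _)
  linarith

lemma pref_reverse (c : ℕ → ℕ) (k : ℕ) :
    (pref c k).reverse = (List.range k).map (fun n => c (k - 1 - n)) := by
  apply List.ext_getElem
  · simp [pref]
  · intro n h1 h2
    simp only [pref, List.getElem_reverse, List.getElem_map, List.getElem_range,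
      List.length_reverse, List.length_map, List.length_range] at *
    try (congr 1 <;> omega)

end CFA

/-- If `t` is in the Lagrange spectrum, `ε > 0`, and `x = [0; a 1, a 2, …] ∈ (0,1)` is an
irrational with `k(x) = t`, then there are `n₀ ≥ 1` and a bi-infinite sequence of positive
integers agreeing with `(a_n)` from position `n₀` on which lies in `Σ_{t+ε}`. -/
theorem stmt_9 (t : ℝ) (ht : ∃ y : ℝ, Irrational y ∧ kval y = ENNReal.ofReal t)
    (ε : ℝ) (hε : 0 < ε) (x : ℝ) (hx : x ∈ Set.Ioo (0 : ℝ) 1) (hxirr : Irrational x)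
    (a : ℕ → ℕ) (ha : ∀ i, 0 < a i) (hxa : x = cfVal01 a)
    (hkx : kval x = ENNReal.ofReal t) :
    ∃ n₀ : ℕ, 0 < n₀ ∧ ∃ b : ℤ → ℕ,
      (∀ j : ℤ, (n₀ : ℤ) ≤ j → b j = a j.toNat) ∧ b ∈ SigmaT (t + ε) := by
  classical
  open CFA in
  obtain ⟨ht1, N₁, hN₁⟩ := CFA.key_dioph (t := t) (δ := ε/2) (by linarith) ha hxa hkx
  set c : ℕ → ℕ := fun i => a (i+1) with hcdef
  have hc : CFA.posS c := fun i => ha (i+1)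
  obtain ⟨L, hL⟩ := exists_pow_lt_of_lt_one (show (0:ℝ) < ε/16 by linarith)
    (by norm_num : (1/2 : ℝ) < 1)
  have hLpow : (0:ℝ) < (1/2:ℝ)^L := by positivity
  set G : ℕ := L + 1 with hGdef
  set K : ℕ := 2*L + 2 with hKdef
  -- boundedness of a
  have hbound : ∀ k, N₁ + 2 ≤ k → (a k : ℝ) ≤ t + ε/2 := by
    intro k hk
    obtain ⟨m, rfl⟩ : ∃ m, k = m + 2 := ⟨k - 2, by omega⟩
    have h1 := hN₁ m (by omega)
    have h2 : (a (m+2) : ℝ) ≤ cfVal (fun i => a (m+2+i)) := by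
      have h := CFA.cfVal_lb (c := fun i => a (m+2+i)) (fun i => ha _)
      simpa using h
    have h3 : (0:ℝ) ≤ (CFA.mB (CFA.pref c (m+1)) : ℝ) / (CFA.mA (CFA.pref c (m+1)) : ℝ) := by
      positivity
    linarith
  set Mb : ℕ := max (Nat.ceil (t + ε/2)) ((Finset.range (N₁+2)).sup a) with hMbdef
  have hMb : ∀ k, a k ≤ Mb := by
    intro k
    by_cases hk : k < N₁ + 2
    · exact le_max_of_le_right (Finset.le_sup (Finset.mem_range.mpr hk))
    · have h1 := hbound k (by omega)
      have h2 : a k ≤ Nat.ceil (t + ε/2) := by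
        have hceil := Nat.le_ceil (t + ε/2)
        exact_mod_cast le_trans h1 hceil
      exact le_max_of_le_left h2
  -- pigeonhole: a long repeated word
  set Nbig : ℕ := N₁ + K + L + 5 with hNbigdef
  have hIci : (Set.Ici Nbig).Infinite := Set.Ici_infinite _
  haveI := hIci.to_subtype
  obtain ⟨p₁, p₂, hpne, hpeq⟩ := Finite.exists_ne_map_eq_of_infinite
    (fun (n : Set.Ici Nbig) (j : Fin (K+1)) =>
      (⟨a (n.1 + j.1), by have := hMb (n.1 + j.1); omega⟩ : Fin (Mb+1)))
  obtain ⟨n₁, n₂, hn₁big, hlt, hword⟩ :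
      ∃ n₁ n₂ : ℕ, Nbig ≤ n₁ ∧ n₁ < n₂ ∧ ∀ j, j ≤ K → a (n₁ + j) = a (n₂ + j) := by
    have hQ : ∀ j, j ≤ K → a (p₁.1 + j) = a (p₂.1 + j) := by
      intro j hj
      have h := congrFun hpeq ⟨j, by omega⟩
      have h2 := congrArg Fin.val h
      simpa using h2
    have hne : p₁.1 ≠ p₂.1 := fun h => hpne (Subtype.ext h)
    rcases Nat.lt_or_ge p₁.1 p₂.1 with h | h
    · exact ⟨p₁.1, p₂.1, p₁.2, h, hQ⟩
    · exact ⟨p₂.1, p₁.1, p₂.2, by omega, fun j hj => (hQ j hj).symm⟩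
  set P : ℕ := n₂ - n₁ with hPdef
  have hP1 : 1 ≤ P := by omega
  set b : ℤ → ℕ :=
    fun j => if (n₁:ℤ) ≤ j then a j.toNat else a (n₁ + ((j - n₁) % (P:ℤ)).toNat) with hbdef
  have hposb : ∀ n : ℤ, 0 < b n := by
    intro n
    rw [hbdef]
    dsimp only
    split <;> exact ha _
  have hbge : ∀ j : ℤ, (n₁:ℤ) ≤ j → b j = a j.toNat := by
    intro j hj
    rw [hbdef]
    dsimp only
    rw [if_pos hj]
  refine ⟨n₁, by omega, b, hbge, hposb, ?_⟩
  -- the λ bound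
  intro i
  -- period invariance
  have hInv : ∀ j : ℤ, j ≤ (n₁:ℤ) + K → b j = b (j + P) := by
    intro j hj
    by_cases h1 : (n₁:ℤ) ≤ j
    · rw [hbge j h1, hbge (j + P) (by omega)]
      obtain ⟨jj, hjK, e1, e2⟩ : ∃ jj : ℕ, jj ≤ K ∧ j.toNat = n₁ + jj ∧
          (j + P).toNat = n₂ + jj := ⟨j.toNat - n₁, by omega, by omega, by omega⟩
      rw [e1, e2]
      exact hword jj hjK
    · push_neg at h1
      have hmod0 : (j - n₁ + P) % (P:ℤ) = (j - n₁) % (P:ℤ) := by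
        have := Int.add_mul_emod_self_left (a := j - n₁) (b := (P:ℤ)) (c := 1)
        simpa using this
      by_cases h2 : (n₁:ℤ) ≤ j + P
      · have hmod : (j - n₁) % (P:ℤ) = j - n₁ + P := by
          rw [← hmod0]
          exact Int.emod_eq_of_lt (by omega) (by omega)
        rw [hbdef]
        dsimp only
        rw [if_neg (by omega), if_pos h2, hmod]
        congr 1
        omega
      · push_neg at h2
        rw [hbdef]
        dsimp only
        rw [if_neg (by omega), if_neg (by omega)]
        congr 2
        rw [show j + (P:ℤ) - n₁ = j - n₁ + P by ring, hmod0]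
  -- window shifting
  have hwin : ∀ (d : ℕ) (i' : ℤ), ((n₁:ℤ) + G - i').toNat ≤ d →
      ∃ m : ℤ, (n₁:ℤ) + G ≤ m ∧ ∀ j : ℤ, -(G:ℤ) ≤ j → j ≤ G → b (i' + j) = b (m + j) := by
    intro d
    induction d with
    | zero =>
      intro i' hi'
      exact ⟨i', by omega, fun j _ _ => rfl⟩
    | succ d ih =>
      intro i' hi'
      by_cases hc1 : (n₁:ℤ) + G ≤ i'
      · exact ⟨i', hc1, fun j _ _ => rfl⟩
      · push_neg at hc1
        have hstep : ∀ j : ℤ, -(G:ℤ) ≤ j → j ≤ G → b (i' + j) = b ((i' + P) + j) := by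
          intro j hj1 hj2
          have h := hInv (i' + j) (by omega)
          rw [show i' + j + (P:ℤ) = (i' + P) + j by ring] at h
          exact h
        obtain ⟨m, hm1, hm2⟩ := ih (i' + P) (by omega)
        exact ⟨m, hm1, fun j h1 h2 => (hstep j h1 h2).trans (hm2 j h1 h2)⟩
  obtain ⟨m, hm1, hm2⟩ := hwin ((n₁:ℤ) + G - i).toNat i le_rfl
  set M : ℕ := m.toNat with hMdef
  have hmM : (M:ℤ) = m := by omega
  have hMge : n₁ + G ≤ M := by omega
  have hbm : ∀ j : ℤ, -(G:ℤ) ≤ j → b (m + j) = a (m + j).toNat :=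
    fun j hj => hbge (m + j) (by omega)
  -- forward comparison
  have hfwd : ∀ n : ℕ, n < L + 1 → b (i + (n:ℤ)) = a (M + n) := by
    intro n hn
    rw [hm2 n (by omega) (by omega), hbm n (by omega)]
    congr 1
    omega
  -- backward comparison
  set d₁ : ℕ → ℕ := fun k => b (i - ((k:ℤ) + 1)) with hd₁def
  have hd₁pos : CFA.posS d₁ := fun k => hposb _
  have hbwd : ∀ n : ℕ, n < L + 1 → d₁ n = a (M - 1 - n) := by
    intro n hn
    have h := hm2 (-((n:ℤ)+1)) (by omega) (by omega)
    rw [show i + -((n:ℤ)+1) = i - ((n:ℤ)+1) by ring] at h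
    rw [hd₁def]
    dsimp only
    rw [h, hbm (-((n:ℤ)+1)) (by omega)]
    congr 1
    omega
  -- the reference quantities
  set g : ℕ → ℕ := fun n => a (M - 1 - n) with hgdef
  have hgpos : CFA.posS g := fun n => ha _
  have hrev1 : 1 ≤ CFA.V (CFA.pref g (M-1)) := by
    have e : M - 1 = (M - 2) + 1 := by omega
    rw [e, CFA.pref_succ_cons]
    exact CFA.V_cons_one_le (hgpos 0) (CFA.posL_pref (fun n => hgpos (n+1)) _)
  -- decompose the reversed prefix list
  have hpref_eq : CFA.pref d₁ (L+1) = CFA.pref g (L+1) :=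
    CFA.pref_congr (L+1) (fun n hn => hbwd n hn)
  have hsplit : CFA.pref g (M-1) = CFA.pref d₁ (L+1) ++ CFA.pref (fun n => g (L+1+n)) (M-1-(L+1)) := by
    rw [hpref_eq, ← CFA.pref_add]
    congr 1
    omega
  have hBdist : |cfVal d₁ - CFA.V (CFA.pref g (M-1))| ≤ 2 * (1/2:ℝ)^L := by
    rw [hsplit]
    exact CFA.cfVal_dist_list hd₁pos (CFA.posL_pref (fun n => hgpos _) _) L
  -- identify V (pref g (M-1)) with mA/mB of w
  set w : List ℕ := CFA.pref c (M-1) with hwdef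
  have hwpos : CFA.PosL w := CFA.posL_pref hc _
  have hwne : w ≠ [] := by
    rw [hwdef, show M - 1 = (M-2)+1 by omega]
    exact CFA.pref_ne_nil c (M-2)
  have hrevw : w.reverse = CFA.pref g (M-1) := by
    rw [hwdef, CFA.pref_reverse]
    apply List.map_congr_left
    intro n hn
    rw [List.mem_range] at hn
    show a ((M-1) - 1 - n + 1) = a (M-1-n)
    congr 1
    omega
  have hVrev : CFA.V (CFA.pref g (M-1)) = (CFA.mA w : ℝ) / (CFA.mB w : ℝ) := by
    rw [← hrevw]
    rw [CFA.V_eq_A_div_C w.reverse (fun y hy => hwpos y (List.mem_reverse.mp hy))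
      (by simpa using hwne)]
    have h1 : CFA.mA w.reverse = CFA.mA w := by
      unfold CFA.mA
      rw [CFA.cm_reverse]
      rfl
    have h2 : CFA.mC w.reverse = CFA.mB w := by
      unfold CFA.mC CFA.mB
      rw [CFA.cm_reverse]
      rfl
    rw [h1, h2]
  have hVrevinv : (CFA.V (CFA.pref g (M-1)))⁻¹ = (CFA.mB w : ℝ) / (CFA.mA w : ℝ) := by
    rw [hVrev, inv_div]
  -- μ bound at M
  have hμM : cfVal (fun n => a (M + n)) + (CFA.mB w : ℝ) / (CFA.mA w : ℝ) ≤ t + ε/2 := by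
    have h := hN₁ (M-2) (by omega)
    have e1 : (fun i => a ((M-2)+2+i)) = fun n => a (M + n) := by
      funext n; congr 1; omega
    have e2 : CFA.pref c ((M-2)+1) = w := by
      rw [hwdef]; congr 1; omega
    rw [e1, e2] at h
    exact h
  -- forward estimate
  have hFdist : |cfVal (fun n => b (i + (n:ℤ))) - cfVal (fun n => a (M + n))| ≤ 2 * (1/2:ℝ)^L :=
    CFA.cfVal_dist (fun n => hposb _) (fun n => ha _) L hfwd
  -- backward value
  have h01 : cfVal01 (fun n => b (i - (n:ℤ))) = (cfVal d₁)⁻¹ := by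
    have h := CFA.cfVal01_eq (c := fun n => b (i - (n:ℤ))) (fun k => hposb _)
    rw [h]
    congr 1
  have hd₁1 : 1 ≤ cfVal d₁ := CFA.one_le_cfVal hd₁pos
  have hIdist : |(cfVal d₁)⁻¹ - (CFA.V (CFA.pref g (M-1)))⁻¹| ≤ 2 * (1/2:ℝ)^L := by
    calc |(cfVal d₁)⁻¹ - (CFA.V (CFA.pref g (M-1)))⁻¹|
        ≤ |cfVal d₁ - CFA.V (CFA.pref g (M-1))| := CFA.inv_diff_le hd₁1 hrev1
      _ ≤ 2 * (1/2:ℝ)^L := hBdist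
  -- assemble
  have hlam : lambdaZ i b = cfVal (fun n => b (i + (n:ℤ))) + cfVal01 (fun n => b (i - (n:ℤ))) := rfl
  rw [hlam, h01]
  have h1 := (abs_sub_le_iff.mp hFdist).1
  have h2 := (abs_sub_le_iff.mp hIdist).1
  rw [hVrevinv] at h2
  have hfin : 4 * (1/2:ℝ)^L ≤ ε/4 := by linarith
  linarith
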